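/- arXiv:2410.08557 — 9 statements merged into one kernel-verified Lean document; each statement's English description precedes it below -/
import Mathlib

section
/- Let Z_r ∈ ℝ^{D×N_r}, Z_u ∈ ℝ^{D×N_u}, Z_a = [Z_r Z_u], y_a = [y_r; y_u], and w_init ∈ ℝᴰ. Set K_rr = Z_rᵀ Z_r, K_ru = Z_rᵀ Z_u, K_ur = Z_uᵀ Z_r, K_uu = Z_uᵀ Z_u, assume K_rr is invertible and M := (K_uu − K_ur K_rr⁻¹ K_ru)⁻¹ exists. Then the pre-trained parameters w_p = w_init + Z_a (Z_aᵀ Z_a)⁻¹ (y_a − Z_aᵀ w_init) satisfy the decomposition w_p = w_init + Z_r (K_rr⁻¹ + K_rr⁻¹ K_ru M K_ur K_rr⁻¹)(y_r − Z_rᵀ w_init) − Z_u M K_ur K_rr⁻¹ (y_r − Z_rᵀ w_init) − Z_r K_rr⁻¹ K_ru M (y_u − Z_uᵀ w_init) + Z_u M (y_u − Z_uᵀ w_init). -/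
open Matrix

/-- block decomposition of the pre-trained parameters
`w_p = w_init + Z_a (Z_aᵀ Z_a)⁻¹ (y_a − Z_aᵀ w_init)` in terms of the Gram blocks
and the inverse Schur complement `M`. -/
theorem pretrained_block_decomposition {D Nr Nu : ℕ}
    (Zr : Matrix (Fin D) (Fin Nr) ℝ) (Zu : Matrix (Fin D) (Fin Nu) ℝ)
    (yr : Fin Nr → ℝ) (yu : Fin Nu → ℝ) (winit : Fin D → ℝ)
    (Za : Matrix (Fin D) (Fin Nr ⊕ Fin Nu) ℝ) (hZa : Za = Matrix.fromCols Zr Zu)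
    (ya : Fin Nr ⊕ Fin Nu → ℝ) (hya : ya = Sum.elim yr yu)
    (Krr : Matrix (Fin Nr) (Fin Nr) ℝ) (hKrr : Krr = Zrᵀ * Zr)
    (Kru : Matrix (Fin Nr) (Fin Nu) ℝ) (hKru : Kru = Zrᵀ * Zu)
    (Kur : Matrix (Fin Nu) (Fin Nr) ℝ) (hKur : Kur = Zuᵀ * Zr)
    (Kuu : Matrix (Fin Nu) (Fin Nu) ℝ) (hKuu : Kuu = Zuᵀ * Zu)
    (hrr : IsUnit Krr) (hS : IsUnit (Kuu - Kur * Krr⁻¹ * Kru))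
    (M : Matrix (Fin Nu) (Fin Nu) ℝ) (hM : M = (Kuu - Kur * Krr⁻¹ * Kru)⁻¹)
    (wp : Fin D → ℝ)
    (hwp : wp = winit + Za *ᵥ ((Zaᵀ * Za)⁻¹ *ᵥ (ya - Zaᵀ *ᵥ winit))) :
    wp = winit
        + Zr *ᵥ ((Krr⁻¹ + Krr⁻¹ * Kru * M * Kur * Krr⁻¹) *ᵥ (yr - Zrᵀ *ᵥ winit))
        - Zu *ᵥ ((M * Kur * Krr⁻¹) *ᵥ (yr - Zrᵀ *ᵥ winit))
        - Zr *ᵥ ((Krr⁻¹ * Kru * M) *ᵥ (yu - Zuᵀ *ᵥ winit))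
        + Zu *ᵥ (M *ᵥ (yu - Zuᵀ *ᵥ winit)) := by
  subst hZa hya hKrr hKru hKur hKuu hM hwp
  set A := Zrᵀ * Zr with hA
  set B := Zrᵀ * Zu with hB
  set C := Zuᵀ * Zr with hC
  set Dm := Zuᵀ * Zu with hD
  letI iA : Invertible A := hrr.invertible
  have hinvA : ⅟A = A⁻¹ := invOf_eq_nonsing_inv A
  have e : Dm - C * ⅟A * B = Dm - C * A⁻¹ * B := by rw [hinvA]
  letI iS : Invertible (Dm - C * ⅟A * B) := by rw [e]; exact hS.invertible
  have hinvS : ⅟(Dm - C * ⅟A * B) = (Dm - C * A⁻¹ * B)⁻¹ :=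
    (invOf_eq_nonsing_inv _).trans (by rw [e])
  letI iFB : Invertible (fromBlocks A B C Dm) := fromBlocks₁₁Invertible A B C Dm
  have h1 : (fromCols Zr Zu)ᵀ * fromCols Zr Zu = fromBlocks A B C Dm := by
    rw [transpose_fromCols, fromRows_mul_fromCols]
  have hvec : Sum.elim yr yu - (fromCols Zr Zu)ᵀ *ᵥ winit
      = Sum.elim (yr - Zrᵀ *ᵥ winit) (yu - Zuᵀ *ᵥ winit) := by
    rw [transpose_fromCols, fromRows_mulVec]
    ext i
    cases i <;> simp
  have hinv : ((fromCols Zr Zu)ᵀ * fromCols Zr Zu)⁻¹ =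
      fromBlocks (A⁻¹ + A⁻¹ * B * (Dm - C * A⁻¹ * B)⁻¹ * C * A⁻¹)
        (-(A⁻¹ * B * (Dm - C * A⁻¹ * B)⁻¹))
        (-((Dm - C * A⁻¹ * B)⁻¹ * C * A⁻¹)) ((Dm - C * A⁻¹ * B)⁻¹) := by
    rw [h1, ← invOf_eq_nonsing_inv, invOf_fromBlocks₁₁_eq, hinvS, hinvA]
  rw [hinv, hvec, fromBlocks_mulVec, fromCols_mulVec_sumElim]
  simp only [Sum.elim_comp_inl, Sum.elim_comp_inr, mulVec_add, Matrix.mulVec_neg,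
    Matrix.neg_mulVec]
  abel
end

section
/- Let Z_r ∈ ℝ^{D×N_r}, Z_u ∈ ℝ^{D×N_u}, Z_a = [Z_r Z_u], y_a = [y_r; y_u], and w_init ∈ ℝᴰ. Assume K_rr = Z_rᵀ Z_r is invertible and M := (K_uu − K_ur K_rr⁻¹ K_ru)⁻¹ exists, where K_ru = Z_rᵀ Z_u, K_ur = Z_uᵀ Z_r, K_uu = Z_uᵀ Z_u. Define w_p = w_init + Z_a (Z_aᵀ Z_a)⁻¹ (y_a − Z_aᵀ w_init) and w_r = w_init + Z_r K_rr⁻¹ (y_r − Z_rᵀ w_init), and let Π_r = Z_r K_rr⁻¹ Z_rᵀ. Then w_r − w_p = (I_D − Π_r) Z_u M ( K_ur K_rr⁻¹ (y_r − Z_rᵀ w_init) + Z_uᵀ w_init − y_u ). -/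
open Matrix

/-- Lemma 3, first identity: with `w_p` the minimum-norm interpolant
of all data and `w_r` that of the remaining data, and `Π_r = Z_r K_rr⁻¹ Z_rᵀ`,
`w_r − w_p = (I − Π_r) Z_u M (K_ur K_rr⁻¹ (y_r − Z_rᵀ w_init) + Z_uᵀ w_init − y_u)`. -/
theorem retrain_minus_pretrain {D Nr Nu : ℕ}
    (Zr : Matrix (Fin D) (Fin Nr) ℝ) (Zu : Matrix (Fin D) (Fin Nu) ℝ)
    (yr : Fin Nr → ℝ) (yu : Fin Nu → ℝ) (winit : Fin D → ℝ)
    (Za : Matrix (Fin D) (Fin Nr ⊕ Fin Nu) ℝ) (hZa : Za = Matrix.fromCols Zr Zu)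
    (ya : Fin Nr ⊕ Fin Nu → ℝ) (hya : ya = Sum.elim yr yu)
    (Krr : Matrix (Fin Nr) (Fin Nr) ℝ) (hKrr : Krr = Zrᵀ * Zr)
    (Kru : Matrix (Fin Nr) (Fin Nu) ℝ) (hKru : Kru = Zrᵀ * Zu)
    (Kur : Matrix (Fin Nu) (Fin Nr) ℝ) (hKur : Kur = Zuᵀ * Zr)
    (Kuu : Matrix (Fin Nu) (Fin Nu) ℝ) (hKuu : Kuu = Zuᵀ * Zu)
    (hrr : IsUnit Krr) (hS : IsUnit (Kuu - Kur * Krr⁻¹ * Kru))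
    (M : Matrix (Fin Nu) (Fin Nu) ℝ) (hM : M = (Kuu - Kur * Krr⁻¹ * Kru)⁻¹)
    (Pr : Matrix (Fin D) (Fin D) ℝ) (hPr : Pr = Zr * Krr⁻¹ * Zrᵀ)
    (wp : Fin D → ℝ)
    (hwp : wp = winit + Za *ᵥ ((Zaᵀ * Za)⁻¹ *ᵥ (ya - Zaᵀ *ᵥ winit)))
    (wr : Fin D → ℝ)
    (hwr : wr = winit + Zr *ᵥ (Krr⁻¹ *ᵥ (yr - Zrᵀ *ᵥ winit))) :
    wr - wp =
      ((1 - Pr) * Zu * M) *ᵥ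
        (Kur *ᵥ (Krr⁻¹ *ᵥ (yr - Zrᵀ *ᵥ winit)) + Zuᵀ *ᵥ winit - yu) := by
  have hrrdet : IsUnit Krr.det := (Matrix.isUnit_iff_isUnit_det _).mp hrr
  have hSdet : IsUnit (Kuu - Kur * Krr⁻¹ * Kru).det := (Matrix.isUnit_iff_isUnit_det _).mp hS
  have hK1 : Krr * Krr⁻¹ = 1 := Matrix.mul_nonsing_inv _ hrrdet
  have hSM : (Kuu - Kur * Krr⁻¹ * Kru) * M = 1 := by
    rw [hM]; exact Matrix.mul_nonsing_inv _ hSdet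
  have hgram : Zaᵀ * Za = fromBlocks Krr Kru Kur Kuu := by
    rw [hZa, transpose_fromCols, fromRows_mul_fromCols, hKrr, hKru, hKur, hKuu]
  -- cancellation helpers
  have cNr : Krr * (Krr⁻¹ * (Kru * (M * (Kur * Krr⁻¹)))) = Kru * (M * (Kur * Krr⁻¹)) := by
    rw [← Matrix.mul_assoc, hK1, Matrix.one_mul]
  have cNu : Krr * (Krr⁻¹ * (Kru * M)) = Kru * M := by
    rw [← Matrix.mul_assoc, hK1, Matrix.one_mul]
  have sc2 : Kur * (Krr⁻¹ * (Kru * M)) = Kuu * M - 1 := by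
    have h := hSM
    rw [sub_mul] at h
    have h2 : Kur * (Krr⁻¹ * (Kru * M)) = Kur * Krr⁻¹ * Kru * M := by
      rw [Matrix.mul_assoc (Kur * Krr⁻¹), Matrix.mul_assoc]
    rw [h2, ← h]; abel
  have sc1 : Kur * (Krr⁻¹ * (Kru * (M * (Kur * Krr⁻¹)))) =
      Kuu * (M * (Kur * Krr⁻¹)) - Kur * Krr⁻¹ := by
    have e : Kur * (Krr⁻¹ * (Kru * (M * (Kur * Krr⁻¹)))) =
        Kur * (Krr⁻¹ * (Kru * M)) * (Kur * Krr⁻¹) := by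
      simp only [Matrix.mul_assoc]
    rw [e, sc2, Matrix.sub_mul, Matrix.one_mul, Matrix.mul_assoc]
  set W := fromBlocks (Krr⁻¹ + Krr⁻¹ * Kru * M * Kur * Krr⁻¹) (-(Krr⁻¹ * Kru * M))
      (-(M * Kur * Krr⁻¹)) M with hW
  have hinv : (Zaᵀ * Za)⁻¹ = W := by
    apply Matrix.inv_eq_right_inv
    rw [hgram, hW, fromBlocks_multiply, ← fromBlocks_one, fromBlocks_inj]
    refine ⟨?_, ?_, ?_, ?_⟩
    · simp only [Matrix.mul_add, Matrix.mul_neg, Matrix.mul_assoc, hK1, cNr]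
      abel
    · simp only [Matrix.mul_neg, Matrix.mul_assoc, cNu]
      abel
    · simp only [Matrix.mul_add, Matrix.mul_neg, Matrix.mul_assoc, sc1]
      abel
    · simp only [Matrix.mul_neg, Matrix.mul_assoc, sc2]
      abel
  have hvec : ya - Zaᵀ *ᵥ winit = Sum.elim (yr - Zrᵀ *ᵥ winit) (yu - Zuᵀ *ᵥ winit) := by
    rw [hZa, hya, transpose_fromCols, fromRows_mulVec]
    funext x; cases x <;> rfl
  subst hwr hwp
  rw [hinv, hvec, hZa, hW]
  rw [fromBlocks_mulVec]
  simp only [Sum.elim_comp_inl, Sum.elim_comp_inr, fromCols_mulVec_sumElim]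
  simp only [hPr, hKru, hKur, Matrix.sub_mulVec, Matrix.add_mulVec, Matrix.neg_mulVec,
    Matrix.mulVec_add, Matrix.mulVec_sub, Matrix.mulVec_neg, ← Matrix.mulVec_mulVec,
    Matrix.one_mulVec]
  abel
end

section
/- Let Z_r ∈ ℝ^{D×N_r}, Z_u ∈ ℝ^{D×N_u}, Z_a = [Z_r Z_u], assume K_rr = Z_rᵀ Z_r is invertible and M := (K_uu − K_ur K_rr⁻¹ K_ru)⁻¹ exists. Let w_p ∈ ℝᴰ satisfy Z_rᵀ w_p = y_r (interpolation of remaining data), let ỹ_u ∈ ℝ^{N_u}, ỹ_a = [y_r; ỹ_u], and define the unlearned model w_u = w_p + Z_a (Z_aᵀ Z_a)⁻¹ (ỹ_a − Z_aᵀ w_p). Then, with Π_r = Z_r K_rr⁻¹ Z_rᵀ, it holds that w_p − w_u = (I_D − Π_r) Z_u M ( Z_uᵀ w_p − ỹ_u ). -/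
open Matrix

/-- Lemma 3, second identity: if `w_p` interpolates the remaining data
(`Z_rᵀ w_p = y_r`) and the unlearned model is
`w_u = w_p + Z_a (Z_aᵀ Z_a)⁻¹ (ỹ_a − Z_aᵀ w_p)` with `ỹ_a = [y_r; ỹ_u]`, then
`w_p − w_u = (I − Π_r) Z_u M (Z_uᵀ w_p − ỹ_u)`. -/
theorem pretrain_minus_unlearn {D Nr Nu : ℕ}
    (Zr : Matrix (Fin D) (Fin Nr) ℝ) (Zu : Matrix (Fin D) (Fin Nu) ℝ)
    (yr : Fin Nr → ℝ) (ytu : Fin Nu → ℝ)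
    (Za : Matrix (Fin D) (Fin Nr ⊕ Fin Nu) ℝ) (hZa : Za = Matrix.fromCols Zr Zu)
    (yta : Fin Nr ⊕ Fin Nu → ℝ) (hyta : yta = Sum.elim yr ytu)
    (Krr : Matrix (Fin Nr) (Fin Nr) ℝ) (hKrr : Krr = Zrᵀ * Zr)
    (Kru : Matrix (Fin Nr) (Fin Nu) ℝ) (hKru : Kru = Zrᵀ * Zu)
    (Kur : Matrix (Fin Nu) (Fin Nr) ℝ) (hKur : Kur = Zuᵀ * Zr)
    (Kuu : Matrix (Fin Nu) (Fin Nu) ℝ) (hKuu : Kuu = Zuᵀ * Zu)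
    (hrr : IsUnit Krr) (hS : IsUnit (Kuu - Kur * Krr⁻¹ * Kru))
    (M : Matrix (Fin Nu) (Fin Nu) ℝ) (hM : M = (Kuu - Kur * Krr⁻¹ * Kru)⁻¹)
    (Pr : Matrix (Fin D) (Fin D) ℝ) (hPr : Pr = Zr * Krr⁻¹ * Zrᵀ)
    (wp : Fin D → ℝ) (hinterp : Zrᵀ *ᵥ wp = yr)
    (wu : Fin D → ℝ)
    (hwu : wu = wp + Za *ᵥ ((Zaᵀ * Za)⁻¹ *ᵥ (yta - Zaᵀ *ᵥ wp))) :
    wp - wu = ((1 - Pr) * Zu * M) *ᵥ (Zuᵀ *ᵥ wp - ytu) := by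
  subst hZa hyta hKrr hKru hKur hKuu hM hPr hwu
  set A := Zrᵀ * Zr with hA
  set S := Zuᵀ * Zu - Zuᵀ * Zr * A⁻¹ * (Zrᵀ * Zu) with hSdef
  -- invertibility
  haveI iA : Invertible A := hrr.invertible
  haveI iS : Invertible S := hS.invertible
  have hinvA : ⅟ A = A⁻¹ := invOf_eq_nonsing_inv A
  -- the Gram block matrix
  have hblock : (Matrix.fromCols Zr Zu)ᵀ * Matrix.fromCols Zr Zu =
      Matrix.fromBlocks (Zrᵀ * Zr) (Zrᵀ * Zu) (Zuᵀ * Zr) (Zuᵀ * Zu) := by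
    rw [transpose_fromCols, fromRows_mul_fromCols]
  have hSinvA : Zuᵀ * Zu - Zuᵀ * Zr * ⅟ A * (Zrᵀ * Zu) = S := by rw [hinvA]
  haveI iS' : Invertible (Zuᵀ * Zu - Zuᵀ * Zr * ⅟ A * (Zrᵀ * Zu)) := by
    rw [hSinvA]; exact iS
  haveI iB : Invertible (Matrix.fromBlocks (Zrᵀ * Zr) (Zrᵀ * Zu) (Zuᵀ * Zr) (Zuᵀ * Zu)) :=
    Matrix.fromBlocks₁₁Invertible _ _ _ _
  have hinvB : ((Matrix.fromCols Zr Zu)ᵀ * Matrix.fromCols Zr Zu)⁻¹ =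
      Matrix.fromBlocks (⅟ A + ⅟ A * (Zrᵀ * Zu) * ⅟ S * (Zuᵀ * Zr) * ⅟ A)
        (-(⅟ A * (Zrᵀ * Zu) * ⅟ S)) (-(⅟ S * (Zuᵀ * Zr) * ⅟ A)) (⅟ S) := by
    rw [hblock, ← invOf_eq_nonsing_inv]
    have := Matrix.invOf_fromBlocks₁₁_eq (Zrᵀ * Zr) (Zrᵀ * Zu) (Zuᵀ * Zr) (Zuᵀ * Zu)
    simp only [invOf_eq_nonsing_inv] at this ⊢
    exact this
  -- the residual vector
  have hres : Sum.elim yr ytu - (Matrix.fromCols Zr Zu)ᵀ *ᵥ wp =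
      Sum.elim (0 : Fin Nr → ℝ) (ytu - Zuᵀ *ᵥ wp) := by
    rw [transpose_fromCols, fromRows_mulVec, hinterp]
    ext (i | i) <;> simp
  set u := ytu - Zuᵀ *ᵥ wp with hu
  set X := -(A⁻¹ * (Zrᵀ * Zu) * S⁻¹) with hX
  -- compute the correction term
  have hcorr : Matrix.fromCols Zr Zu *ᵥ
      (((Matrix.fromCols Zr Zu)ᵀ * Matrix.fromCols Zr Zu)⁻¹ *ᵥ
        (Sum.elim yr ytu - (Matrix.fromCols Zr Zu)ᵀ *ᵥ wp)) =
      (Zr * X + Zu * S⁻¹) *ᵥ u := by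
    rw [hres, hinvB, Matrix.fromBlocks_mulVec, fromCols_mulVec_sumElim]
    simp only [Sum.elim_comp_inl, Sum.elim_comp_inr, Matrix.mulVec_zero, zero_add, hinvA, invOf_eq_nonsing_inv S, ← hSdef,
      Matrix.mulVec_mulVec, ← Matrix.add_mulVec, hX]
  -- the key matrix identity
  have hmat : Zr * X + Zu * S⁻¹ = (1 - Zr * A⁻¹ * Zrᵀ) * Zu * S⁻¹ := by
    simp only [hX, Matrix.mul_neg, Matrix.sub_mul, Matrix.one_mul, Matrix.mul_assoc]
    abel
  have hneg : Zuᵀ *ᵥ wp - ytu = -u := by rw [hu, neg_sub]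
  rw [hcorr, hmat, hneg, Matrix.mulVec_neg]
  abel
end

section
/- Let Z_r ∈ ℝ^{D×N_r}, Z_u ∈ ℝ^{D×N_u}, Z_a = [Z_r Z_u], w_init ∈ ℝᴰ, y_a = [y_r; y_u], ỹ_u ∈ ℝ^{N_u}, ỹ_a = [y_r; ỹ_u]. Assume K_rr = Z_rᵀ Z_r is invertible and M := (K_uu − K_ur K_rr⁻¹ K_ru)⁻¹ exists. Define w_p = w_init + Z_a (Z_aᵀ Z_a)⁻¹ (y_a − Z_aᵀ w_init), w_u = w_p + Z_a (Z_aᵀ Z_a)⁻¹ (ỹ_a − Z_aᵀ w_p), w_r = w_init + Z_r K_rr⁻¹ (y_r − Z_rᵀ w_init), and Π_r = Z_r K_rr⁻¹ Z_rᵀ. Then w_r − w_u = (I_D − Π_r) Z_u M ( Z_uᵀ Π_r (w_p − w_init) + Z_uᵀ w_init − ỹ_u ). -/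
open Matrix

/-- Theorem 1, gap to the gold standard: with the SGD minimum-norm
pre-trained, unlearned, and retrained models `w_p`, `w_u`, `w_r` given by their
closed forms, `w_r − w_u = (I − Π_r) Z_u M (Z_uᵀ Π_r (w_p − w_init) + Z_uᵀ w_init − ỹ_u)`. -/
theorem gap_to_gold_standard {D Nr Nu : ℕ}
    (Zr : Matrix (Fin D) (Fin Nr) ℝ) (Zu : Matrix (Fin D) (Fin Nu) ℝ)
    (yr : Fin Nr → ℝ) (yu : Fin Nu → ℝ) (ytu : Fin Nu → ℝ) (winit : Fin D → ℝ)
    (Za : Matrix (Fin D) (Fin Nr ⊕ Fin Nu) ℝ) (hZa : Za = Matrix.fromCols Zr Zu)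
    (ya : Fin Nr ⊕ Fin Nu → ℝ) (hya : ya = Sum.elim yr yu)
    (yta : Fin Nr ⊕ Fin Nu → ℝ) (hyta : yta = Sum.elim yr ytu)
    (Krr : Matrix (Fin Nr) (Fin Nr) ℝ) (hKrr : Krr = Zrᵀ * Zr)
    (Kru : Matrix (Fin Nr) (Fin Nu) ℝ) (hKru : Kru = Zrᵀ * Zu)
    (Kur : Matrix (Fin Nu) (Fin Nr) ℝ) (hKur : Kur = Zuᵀ * Zr)
    (Kuu : Matrix (Fin Nu) (Fin Nu) ℝ) (hKuu : Kuu = Zuᵀ * Zu)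
    (hrr : IsUnit Krr) (hS : IsUnit (Kuu - Kur * Krr⁻¹ * Kru))
    (M : Matrix (Fin Nu) (Fin Nu) ℝ) (hM : M = (Kuu - Kur * Krr⁻¹ * Kru)⁻¹)
    (Pr : Matrix (Fin D) (Fin D) ℝ) (hPr : Pr = Zr * Krr⁻¹ * Zrᵀ)
    (wp : Fin D → ℝ)
    (hwp : wp = winit + Za *ᵥ ((Zaᵀ * Za)⁻¹ *ᵥ (ya - Zaᵀ *ᵥ winit)))
    (wu : Fin D → ℝ)
    (hwu : wu = wp + Za *ᵥ ((Zaᵀ * Za)⁻¹ *ᵥ (yta - Zaᵀ *ᵥ wp)))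
    (wr : Fin D → ℝ)
    (hwr : wr = winit + Zr *ᵥ (Krr⁻¹ *ᵥ (yr - Zrᵀ *ᵥ winit))) :
    wr - wu =
      ((1 - Pr) * Zu * M) *ᵥ
        (Zuᵀ *ᵥ (Pr *ᵥ (wp - winit)) + Zuᵀ *ᵥ winit - ytu) := by
  -- invertibility setup
  have hdrr := (Matrix.isUnit_iff_isUnit_det Krr).mp hrr
  have hdS := (Matrix.isUnit_iff_isUnit_det _).mp hS
  letI iK : Invertible Krr := Krr.invertibleOfIsUnitDet hdrr
  have hinvK : ⅟Krr = Krr⁻¹ := invOf_eq_nonsing_inv Krr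
  letI iS : Invertible (Kuu - Kur * ⅟Krr * Kru) := by
    rw [hinvK]; exact Matrix.invertibleOfIsUnitDet _ hdS
  letI iFB : Invertible (Matrix.fromBlocks Krr Kru Kur Kuu) :=
    Matrix.fromBlocks₁₁Invertible Krr Kru Kur Kuu
  have hinvS : ⅟(Kuu - Kur * ⅟Krr * Kru) = M := by
    rw [invOf_eq_nonsing_inv, hinvK, hM]
  have h2 : Krr⁻¹ * Krr = 1 := Matrix.nonsing_inv_mul _ hdrr
  have hK : Zaᵀ * Za = Matrix.fromBlocks Krr Kru Kur Kuu := by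
    rw [hZa, Matrix.transpose_fromCols, Matrix.fromRows_mul_fromCols,
      hKrr, hKru, hKur, hKuu]
  have hKinv : (Zaᵀ * Za)⁻¹ =
      Matrix.fromBlocks (Krr⁻¹ + Krr⁻¹ * Kru * M * Kur * Krr⁻¹) (-(Krr⁻¹ * Kru * M))
        (-(M * Kur * Krr⁻¹)) M := by
    rw [hK, ← invOf_eq_nonsing_inv, Matrix.invOf_fromBlocks₁₁_eq, hinvS, hinvK]
  have hKK : (Zaᵀ * Za) * (Zaᵀ * Za)⁻¹ = 1 := by
    rw [hK, ← invOf_eq_nonsing_inv]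
    exact mul_invOf_self _
  -- abbreviations
  set a : Fin Nr → ℝ := yr - Zrᵀ *ᵥ winit with ha
  set b : Fin Nu → ℝ := yu - Zuᵀ *ᵥ winit with hb
  set c : Fin Nu → ℝ := ytu - yu with hc
  have hsplit : ya - Zaᵀ *ᵥ winit = Sum.elim a b := by
    rw [hya, hZa, Matrix.transpose_fromCols, Matrix.fromRows_mulVec]
    ext (i | i) <;> simp [ha, hb]
  have hwp' : wp = winit +
      (Zr *ᵥ ((Krr⁻¹ + Krr⁻¹ * Kru * M * Kur * Krr⁻¹) *ᵥ a + (-(Krr⁻¹ * Kru * M)) *ᵥ b) +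
        Zu *ᵥ ((-(M * Kur * Krr⁻¹)) *ᵥ a + M *ᵥ b)) := by
    rw [hwp, hsplit, hKinv, Matrix.fromBlocks_mulVec, hZa]
    simp only [Sum.elim_comp_inl, Sum.elim_comp_inr, Matrix.fromCols_mulVec_sumElim]
  have hZawp : Zaᵀ *ᵥ wp = ya := by
    rw [hwp, Matrix.mulVec_add, Matrix.mulVec_mulVec, Matrix.mulVec_mulVec, hKK,
      Matrix.one_mulVec]
    abel
  have hcvec : yta - Zaᵀ *ᵥ wp = Sum.elim (0 : Fin Nr → ℝ) c := by
    rw [hZawp, hyta, hya]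
    ext (i | i) <;> simp [hc]
  have hwu' : wu = wp + (Zr *ᵥ ((-(Krr⁻¹ * Kru * M)) *ᵥ c) + Zu *ᵥ (M *ᵥ c)) := by
    rw [hwu, hcvec, hKinv, Matrix.fromBlocks_mulVec, hZa]
    simp only [Sum.elim_comp_inl, Sum.elim_comp_inr, Matrix.fromCols_mulVec_sumElim,
      Matrix.mulVec_zero, zero_add]
  -- cancellation lemmas
  have hcan : ∀ {k : ℕ} (X : Matrix (Fin Nr) (Fin k) ℝ), Krr⁻¹ * (Zrᵀ * (Zr * X)) = X := by
    intro k X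
    rw [← Matrix.mul_assoc Zrᵀ Zr X, ← hKrr, ← Matrix.mul_assoc, h2, Matrix.one_mul]
  have hcan1 : Krr⁻¹ * (Zrᵀ * Zr) = 1 := by rw [← hKrr, h2]
  -- final computation
  rw [hwr, hwu', hwp', hPr, hKru, hKur]
  simp only [Matrix.mulVec_add, Matrix.mulVec_sub, Matrix.add_mulVec, Matrix.sub_mulVec,
    Matrix.neg_mulVec, Matrix.mulVec_neg, Matrix.mulVec_mulVec, Matrix.mul_add, Matrix.mul_sub,
    Matrix.add_mul, Matrix.sub_mul, Matrix.mul_neg, Matrix.neg_mul, Matrix.mul_assoc,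
    Matrix.one_mul, Matrix.mul_one, Matrix.one_mulVec, hcan, hcan1, ha, hb, hc]
  abel
end

section
/- Under the setting of Theorem 1 — Z_r ∈ ℝ^{D×N_r}, Z_u ∈ ℝ^{D×N_u}, Z_a = [Z_r Z_u], K_rr = Z_rᵀ Z_r invertible, M := (K_uu − K_ur K_rr⁻¹ K_ru)⁻¹ existing, Π_r = Z_r K_rr⁻¹ Z_rᵀ, w_p = w_init + Z_a (Z_aᵀ Z_a)⁻¹ (y_a − Z_aᵀ w_init), w_u = w_p + Z_a (Z_aᵀ Z_a)⁻¹ ([y_r; ỹ_u] − Z_aᵀ w_p), w_r = w_init + Z_r K_rr⁻¹ (y_r − Z_rᵀ w_init) — if the forgetting data are relabeled as ỹ_u = Z_uᵀ ( Π_r (w_p − w_init) + w_init ), then the unlearned model coincides exactly with the retrained model: w_u = w_r. -/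
open Matrix

/-- Corollary 1, exact machine unlearning: under the setting of
Theorem 1, relabeling the forgetting data as `ỹ_u = Z_uᵀ (Π_r (w_p − w_init) + w_init)`
makes the unlearned model coincide exactly with the retrained model: `w_u = w_r`. -/
theorem exact_unlearning_by_relabel {D Nr Nu : ℕ}
    (Zr : Matrix (Fin D) (Fin Nr) ℝ) (Zu : Matrix (Fin D) (Fin Nu) ℝ)
    (yr : Fin Nr → ℝ) (yu : Fin Nu → ℝ) (ytu : Fin Nu → ℝ) (winit : Fin D → ℝ)
    (Za : Matrix (Fin D) (Fin Nr ⊕ Fin Nu) ℝ) (hZa : Za = Matrix.fromCols Zr Zu)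
    (ya : Fin Nr ⊕ Fin Nu → ℝ) (hya : ya = Sum.elim yr yu)
    (yta : Fin Nr ⊕ Fin Nu → ℝ) (hyta : yta = Sum.elim yr ytu)
    (Krr : Matrix (Fin Nr) (Fin Nr) ℝ) (hKrr : Krr = Zrᵀ * Zr)
    (Kru : Matrix (Fin Nr) (Fin Nu) ℝ) (hKru : Kru = Zrᵀ * Zu)
    (Kur : Matrix (Fin Nu) (Fin Nr) ℝ) (hKur : Kur = Zuᵀ * Zr)
    (Kuu : Matrix (Fin Nu) (Fin Nu) ℝ) (hKuu : Kuu = Zuᵀ * Zu)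
    (hrr : IsUnit Krr) (hS : IsUnit (Kuu - Kur * Krr⁻¹ * Kru))
    (Pr : Matrix (Fin D) (Fin D) ℝ) (hPr : Pr = Zr * Krr⁻¹ * Zrᵀ)
    (wp : Fin D → ℝ)
    (hwp : wp = winit + Za *ᵥ ((Zaᵀ * Za)⁻¹ *ᵥ (ya - Zaᵀ *ᵥ winit)))
    (wu : Fin D → ℝ)
    (hwu : wu = wp + Za *ᵥ ((Zaᵀ * Za)⁻¹ *ᵥ (yta - Zaᵀ *ᵥ wp)))
    (wr : Fin D → ℝ)
    (hwr : wr = winit + Zr *ᵥ (Krr⁻¹ *ᵥ (yr - Zrᵀ *ᵥ winit)))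
    (hrelabel : ytu = Zuᵀ *ᵥ (Pr *ᵥ (wp - winit) + winit)) :
    wu = wr := by
  classical
  set A : Matrix (Fin Nr ⊕ Fin Nu) (Fin Nr ⊕ Fin Nu) ℝ := Zaᵀ * Za with hA
  have hAblock : A = Matrix.fromBlocks Krr Kru Kur Kuu := by
    rw [hA, hZa, Matrix.transpose_fromCols, Matrix.fromRows_mul_fromCols,
      hKrr, hKru, hKur, hKuu]
  haveI : Invertible Krr := hrr.invertible
  haveI : Invertible (Kuu - Kur * ⅟Krr * Kru) := by
    rw [Matrix.invOf_eq_nonsing_inv]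
    exact hS.invertible
  haveI : Invertible A := by
    rw [hAblock]; exact Matrix.fromBlocks₁₁Invertible Krr Kru Kur Kuu
  have hAdet : IsUnit A.det := Matrix.isUnit_det_of_invertible A
  have hKdet : IsUnit Krr.det := Matrix.isUnit_det_of_invertible Krr
  have hcancel : ∀ x : Fin Nr ⊕ Fin Nu → ℝ, Zaᵀ *ᵥ (Za *ᵥ (A⁻¹ *ᵥ x)) = x := by
    intro x
    rw [Matrix.mulVec_mulVec, ← hA, Matrix.mulVec_mulVec, Matrix.mul_nonsing_inv _ hAdet,
      Matrix.one_mulVec]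
  have h1 : Zaᵀ *ᵥ wp = ya := by
    rw [hwp, Matrix.mulVec_add, hcancel]
    abel
  have hsplit : ∀ w : Fin D → ℝ, Zaᵀ *ᵥ w = Sum.elim (Zrᵀ *ᵥ w) (Zuᵀ *ᵥ w) := by
    intro w
    rw [hZa, Matrix.transpose_fromCols, Matrix.fromRows_mulVec]
  have hrwp : Zrᵀ *ᵥ wp = yr := by
    have := congrArg (fun f => f ∘ Sum.inl) ((hsplit wp).symm.trans h1)
    simpa [hya, funext_iff, Function.comp] using this
  have huwp : Zuᵀ *ᵥ wp = yu := by
    have := congrArg (fun f => f ∘ Sum.inr) ((hsplit wp).symm.trans h1)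
    simpa [hya, funext_iff, Function.comp] using this
  have hrwr : Zrᵀ *ᵥ wr = yr := by
    rw [hwr, Matrix.mulVec_add, Matrix.mulVec_mulVec, ← hKrr, Matrix.mulVec_mulVec,
      Matrix.mul_nonsing_inv _ hKdet, Matrix.one_mulVec]
    abel
  have h2 : wr - winit = Pr *ᵥ (wp - winit) := by
    have hy : yr - Zrᵀ *ᵥ winit = Zrᵀ *ᵥ (wp - winit) := by
      rw [Matrix.mulVec_sub, hrwp]
    rw [hwr, hy, hPr, ← Matrix.mulVec_mulVec, ← Matrix.mulVec_mulVec]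
    abel
  set d : Fin Nu → ℝ := ytu - yu with hdd
  have hru : Zuᵀ *ᵥ (wr - wp) = d := by
    have hsp : Zuᵀ *ᵥ (wr - wp) = Zuᵀ *ᵥ (wr - winit) - Zuᵀ *ᵥ (wp - winit) := by
      rw [← Matrix.mulVec_sub]; congr 1; abel
    rw [hsp, h2, hdd, hrelabel]
    simp only [Matrix.mulVec_add, Matrix.mulVec_sub, huwp]
    abel
  have hrr0 : Zrᵀ *ᵥ (wr - wp) = 0 := by
    rw [Matrix.mulVec_sub, hrwr, hrwp, sub_self]
  have hwrwp : Zaᵀ *ᵥ (wr - wp) = Sum.elim (0 : Fin Nr → ℝ) d := by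
    rw [hsplit, hrr0, hru]
  set v : Fin Nr ⊕ Fin Nu → ℝ := A⁻¹ *ᵥ (yta - Zaᵀ *ᵥ wp) with hv
  have hvw : wu - wp = Za *ᵥ v := by rw [hwu]; abel
  have hwuwp : Zaᵀ *ᵥ (wu - wp) = Sum.elim (0 : Fin Nr → ℝ) d := by
    rw [hvw, hv, hcancel, h1, hyta, hya]
    funext i; cases i <;> simp [hdd, Pi.sub_apply]
  set v' : Fin Nr ⊕ Fin Nu → ℝ :=
    Sum.elim (Krr⁻¹ *ᵥ (yr - Zrᵀ *ᵥ winit)) 0 - A⁻¹ *ᵥ (ya - Zaᵀ *ᵥ winit) with hv'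
  have hvw' : wr - wp = Za *ᵥ v' := by
    rw [hv', Matrix.mulVec_sub, hZa, Matrix.fromCols_mulVec_sumElim, Matrix.mulVec_zero,
      ← hZa, hwr, hwp]
    abel
  have h3 : A *ᵥ v = A *ᵥ v' := by
    rw [hA, ← Matrix.mulVec_mulVec, ← Matrix.mulVec_mulVec, ← hvw, ← hvw', hwuwp, hwrwp]
  have hvv : v = v' := by
    have h5 := congrArg (fun x => A⁻¹ *ᵥ x) h3
    simpa [Matrix.mulVec_mulVec, Matrix.nonsing_inv_mul _ hAdet, Matrix.one_mulVec] using h5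
  have hfin : wu - wp = wr - wp := by rw [hvw, hvw', hvv]
  have := congrArg (fun x => x + wp) hfin
  simpa using this
end

section
/- Let Z_r ∈ ℝ^{D×N_r}, Z_u ∈ ℝ^{D×N_u}, Z_a = [Z_r Z_u], w_init ∈ ℝᴰ, y_a = [y_r; y_u], ỹ_a = [y_r; ỹ_u]. Assume K_rr = Z_rᵀ Z_r is invertible and M := (K_uu − K_ur K_rr⁻¹ K_ru)⁻¹ exists. Define w_p, w_u, w_r by the closed forms w_p = w_init + Z_a (Z_aᵀ Z_a)⁻¹ (y_a − Z_aᵀ w_init), w_u = w_p + Z_a (Z_aᵀ Z_a)⁻¹ (ỹ_a − Z_aᵀ w_p), w_r = w_init + Z_r K_rr⁻¹ (y_r − Z_rᵀ w_init), and let Π_r = Z_r K_rr⁻¹ Z_rᵀ. Then w_r − w_u = (I_D − Π_r) Z_u M ( K_ur K_rr⁻¹ (y_r − Z_rᵀ w_init) + Z_uᵀ w_init − y_u + Z_uᵀ w_p − ỹ_u ). In particular, setting ỹ_u = Z_uᵀ (Π_r (w_p − w_init) + w_init) − y_u + Z_uᵀ w_p yields w_u = w_r. -/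
open Matrix

/-- sum of the two identities of Lemma 3 without using the interpolation
relation `y_u = Z_uᵀ w_p`:
`w_r − w_u = (I − Π_r) Z_u M (K_ur K_rr⁻¹ (y_r − Z_rᵀ w_init) + Z_uᵀ w_init − y_u + Z_uᵀ w_p − ỹ_u)`,
and in particular setting `ỹ_u = Z_uᵀ (Π_r (w_p − w_init) + w_init) − y_u + Z_uᵀ w_p`
yields `w_u = w_r`. -/
theorem gap_and_relabel_rule_NN {D Nr Nu : ℕ}
    (Zr : Matrix (Fin D) (Fin Nr) ℝ) (Zu : Matrix (Fin D) (Fin Nu) ℝ)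
    (yr : Fin Nr → ℝ) (yu : Fin Nu → ℝ) (ytu : Fin Nu → ℝ) (winit : Fin D → ℝ)
    (Za : Matrix (Fin D) (Fin Nr ⊕ Fin Nu) ℝ) (hZa : Za = Matrix.fromCols Zr Zu)
    (ya : Fin Nr ⊕ Fin Nu → ℝ) (hya : ya = Sum.elim yr yu)
    (yta : Fin Nr ⊕ Fin Nu → ℝ) (hyta : yta = Sum.elim yr ytu)
    (Krr : Matrix (Fin Nr) (Fin Nr) ℝ) (hKrr : Krr = Zrᵀ * Zr)
    (Kru : Matrix (Fin Nr) (Fin Nu) ℝ) (hKru : Kru = Zrᵀ * Zu)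
    (Kur : Matrix (Fin Nu) (Fin Nr) ℝ) (hKur : Kur = Zuᵀ * Zr)
    (Kuu : Matrix (Fin Nu) (Fin Nu) ℝ) (hKuu : Kuu = Zuᵀ * Zu)
    (hrr : IsUnit Krr) (hS : IsUnit (Kuu - Kur * Krr⁻¹ * Kru))
    (M : Matrix (Fin Nu) (Fin Nu) ℝ) (hM : M = (Kuu - Kur * Krr⁻¹ * Kru)⁻¹)
    (Pr : Matrix (Fin D) (Fin D) ℝ) (hPr : Pr = Zr * Krr⁻¹ * Zrᵀ)
    (wp : Fin D → ℝ)
    (hwp : wp = winit + Za *ᵥ ((Zaᵀ * Za)⁻¹ *ᵥ (ya - Zaᵀ *ᵥ winit)))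
    (wu : Fin D → ℝ)
    (hwu : wu = wp + Za *ᵥ ((Zaᵀ * Za)⁻¹ *ᵥ (yta - Zaᵀ *ᵥ wp)))
    (wr : Fin D → ℝ)
    (hwr : wr = winit + Zr *ᵥ (Krr⁻¹ *ᵥ (yr - Zrᵀ *ᵥ winit))) :
    wr - wu =
      ((1 - Pr) * Zu * M) *ᵥ
        (Kur *ᵥ (Krr⁻¹ *ᵥ (yr - Zrᵀ *ᵥ winit)) + Zuᵀ *ᵥ winit - yu
          + Zuᵀ *ᵥ wp - ytu) ∧
    (ytu = Zuᵀ *ᵥ (Pr *ᵥ (wp - winit) + winit) - yu + Zuᵀ *ᵥ wp → wu = wr) := by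
  have hdet : IsUnit Krr.det := (Matrix.isUnit_iff_isUnit_det _).mp hrr
  have hA1 : Krr * Krr⁻¹ = 1 := Matrix.mul_nonsing_inv _ hdet
  have hA2 : Krr⁻¹ * Krr = 1 := Matrix.nonsing_inv_mul _ hdet
  have hdetS : IsUnit (Kuu - Kur * Krr⁻¹ * Kru).det :=
    (Matrix.isUnit_iff_isUnit_det _).mp hS
  have hS1 : (Kuu - Kur * Krr⁻¹ * Kru) * M = 1 := by
    rw [hM]; exact Matrix.mul_nonsing_inv _ hdetS
  have hKM : Kur * Krr⁻¹ * Kru * M = Kuu * M - 1 := by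
    have h0 := hS1
    rw [Matrix.sub_mul] at h0
    rw [eq_sub_iff_add_eq, ← h0]
    abel
  -- the explicit block inverse of the Gram matrix
  set N : Matrix (Fin Nr ⊕ Fin Nu) (Fin Nr ⊕ Fin Nu) ℝ :=
    Matrix.fromBlocks (Krr⁻¹ + Krr⁻¹ * Kru * M * Kur * Krr⁻¹) (-(Krr⁻¹ * Kru * M))
      (-(M * Kur * Krr⁻¹)) M with hN
  have hG : Zaᵀ * Za = Matrix.fromBlocks Krr Kru Kur Kuu := by
    rw [hZa, transpose_fromCols, fromRows_mul_fromCols, hKrr, hKru, hKur, hKuu]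
  have hNinv : (Zaᵀ * Za)⁻¹ = N := by
    apply Matrix.inv_eq_right_inv
    rw [hG, hN, Matrix.fromBlocks_multiply, ← Matrix.fromBlocks_one]
    apply Matrix.fromBlocks_inj.mpr
    refine ⟨?_, ?_, ?_, ?_⟩
    · simp only [Matrix.mul_add, Matrix.mul_neg, ← Matrix.mul_assoc, hA1, Matrix.one_mul]
      abel
    · simp only [Matrix.mul_neg, ← Matrix.mul_assoc, hA1, Matrix.one_mul]
      abel
    · simp only [Matrix.mul_add, Matrix.mul_neg, ← Matrix.mul_assoc, hKM, Matrix.sub_mul]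
      simp only [Matrix.one_mul]
      abel
    · simp only [Matrix.mul_neg, ← Matrix.mul_assoc, hKM]
      abel
  set W : Matrix (Fin D) (Fin Nu) ℝ := (1 - Pr) * Zu * M with hW
  have hPrZu : Pr * Zu = Zr * Krr⁻¹ * Kru := by
    rw [hPr, hKru, Matrix.mul_assoc]
  have hCN : Matrix.fromCols Zr Zu * N =
      Matrix.fromCols (Zr * Krr⁻¹ - W * (Kur * Krr⁻¹)) W := by
    rw [hN, fromCols_mul_fromBlocks]
    rw [fromCols_ext_iff]
    constructor
    · rw [hW, hPr, hKru]
      simp only [Matrix.sub_mul, Matrix.mul_sub, Matrix.mul_add, Matrix.add_mul,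
        Matrix.mul_neg, Matrix.neg_mul, Matrix.one_mul, Matrix.mul_one, ← Matrix.mul_assoc]
      abel
    · rw [hW, hPr, hKru]
      simp only [Matrix.sub_mul, Matrix.mul_sub, Matrix.mul_add, Matrix.add_mul,
        Matrix.mul_neg, Matrix.neg_mul, Matrix.one_mul, Matrix.mul_one, ← Matrix.mul_assoc]
      abel
  have key : ∀ (c1 : Fin Nr → ℝ) (c2 : Fin Nu → ℝ),
      Za *ᵥ (N *ᵥ Sum.elim c1 c2) =
        Zr *ᵥ (Krr⁻¹ *ᵥ c1) + W *ᵥ (c2 - Kur *ᵥ (Krr⁻¹ *ᵥ c1)) := by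
    intro c1 c2
    rw [hZa, Matrix.mulVec_mulVec, hCN, fromCols_mulVec_sumElim,
      Matrix.sub_mulVec, Matrix.mulVec_sub]
    simp only [← Matrix.mulVec_mulVec]
    abel
  have hsub : ∀ (a c : Fin Nr → ℝ) (b d : Fin Nu → ℝ),
      Sum.elim a b - Sum.elim c d = Sum.elim (a - c) (b - d) := by
    intro a c b d; funext i; cases i <;> rfl
  have hZaT : ∀ w : Fin D → ℝ, Zaᵀ *ᵥ w = Sum.elim (Zrᵀ *ᵥ w) (Zuᵀ *ᵥ w) := by
    intro w; rw [hZa, transpose_fromCols, fromRows_mulVec]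
  set b1 : Fin Nr → ℝ := yr - Zrᵀ *ᵥ winit with hb1
  set b2 : Fin Nu → ℝ := yu - Zuᵀ *ᵥ winit with hb2
  set r : Fin Nr → ℝ := Krr⁻¹ *ᵥ b1 with hr
  have hwp' : wp - winit = Zr *ᵥ r + W *ᵥ (b2 - Kur *ᵥ r) := by
    rw [hwp, add_sub_cancel_left, hNinv, hya, hZaT, hsub, key]
  -- Zrᵀ kills W
  have hZrPr : Zrᵀ * Pr = Zrᵀ := by
    rw [hPr, ← Matrix.mul_assoc, ← Matrix.mul_assoc, ← hKrr, hA1, Matrix.one_mul]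
  have hZrW : Zrᵀ * W = 0 := by
    rw [hW, ← Matrix.mul_assoc, ← Matrix.mul_assoc, Matrix.mul_sub, Matrix.mul_one,
      hZrPr, sub_self, Matrix.zero_mul, Matrix.zero_mul]
  have hZrwp : Zrᵀ *ᵥ (wp - winit) = b1 := by
    rw [hwp', hr, Matrix.mulVec_add]
    simp only [Matrix.mulVec_mulVec]
    rw [hZrW, Matrix.zero_mulVec, add_zero, ← Matrix.mul_assoc, ← hKrr, hA1,
      Matrix.one_mulVec]
  have hc1 : yr - Zrᵀ *ᵥ wp = 0 := by
    have h2 : wp = winit + (wp - winit) := by abel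
    rw [h2, Matrix.mulVec_add, hZrwp, hb1]
    abel
  have hwu' : wu - wp = W *ᵥ (ytu - Zuᵀ *ᵥ wp) := by
    rw [hwu, add_sub_cancel_left, hNinv, hyta, hZaT, hsub, key, hc1,
      Matrix.mulVec_zero, Matrix.mulVec_zero, Matrix.mulVec_zero, zero_add, sub_zero]
  have hwr' : wr - winit = Zr *ᵥ r := by rw [hwr, add_sub_cancel_left]
  have main : wr - wu = W *ᵥ (Kur *ᵥ r + Zuᵀ *ᵥ winit - yu + Zuᵀ *ᵥ wp - ytu) := by
    have h1 : wr - wu = (wr - winit) - (wp - winit) - (wu - wp) := by abel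
    rw [h1, hwr', hwp', hwu', hb2]
    simp only [Matrix.mulVec_sub, Matrix.mulVec_add]
    abel
  refine ⟨main, ?_⟩
  intro hy
  have hPrZr : Pr * Zr = Zr := by
    rw [hPr, Matrix.mul_assoc, Matrix.mul_assoc, ← hKrr, hA2, Matrix.mul_one]
  have hPrPr : Pr * Pr = Pr := by
    rw [hPr, ← Matrix.mul_assoc, ← Matrix.mul_assoc, Matrix.mul_assoc _ Zrᵀ Zr, ← hKrr,
      Matrix.mul_assoc _ Krr Krr⁻¹, hA1, Matrix.mul_one]
  have hPrW : Pr * W = 0 := by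
    rw [hW, ← Matrix.mul_assoc, ← Matrix.mul_assoc, Matrix.mul_sub, Matrix.mul_one,
      hPrPr, sub_self, Matrix.zero_mul, Matrix.zero_mul]
  have hproj : Pr *ᵥ (wp - winit) = Zr *ᵥ r := by
    rw [hwp', Matrix.mulVec_add]
    simp only [Matrix.mulVec_mulVec]
    rw [hPrW, Matrix.zero_mulVec, add_zero, hPrZr]
  have hv : Kur *ᵥ r + Zuᵀ *ᵥ winit - yu + Zuᵀ *ᵥ wp - ytu = 0 := by
    rw [hy, Matrix.mulVec_add, hproj]
    have hz : Zuᵀ *ᵥ (Zr *ᵥ r) = Kur *ᵥ r := by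
      rw [Matrix.mulVec_mulVec, ← hKur]
    rw [hz]
    abel
  have := main
  rw [hv, Matrix.mulVec_zero] at this
  have h0 : wr = wu := sub_eq_zero.mp this
  exact h0.symm
end

section
/- Let Z_r ∈ ℝ^{D×N_r} with K_rr = Z_rᵀ Z_r invertible, Z_u ∈ ℝ^{D×N_u}, B ∈ ℝ^{N_r×N_u}, Z_{r,sub} = Z_r B, and for a scalar c set Z̃_u = (1−c) Z_{r,sub} + c Z_u. Define K̃_ru = Z_rᵀ Z̃_u, K̃_ur = Z̃_uᵀ Z_r, K̃_uu = Z̃_uᵀ Z̃_u, and K_ru = Z_rᵀ Z_u, K_ur = Z_uᵀ Z_r, K_uu = Z_uᵀ Z_u. Then the Schur complements satisfy K̃_uu − K̃_ur K_rr⁻¹ K̃_ru = c² ( K_uu − K_ur K_rr⁻¹ K_ru ). Consequently, if M := (K_uu − K_ur K_rr⁻¹ K_ru)⁻¹ exists and c ≠ 0, then K̃_uu − K̃_ur K_rr⁻¹ K̃_ru is invertible with inverse M̃ = c⁻² M. -/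
open Matrix

/-- Appendix A, equation (A.3): with `Z̃_u = (1−c) Z_{r,sub} + c Z_u`
and `Z_{r,sub} = Z_r B`, the mixed Schur complement satisfies
`K̃_uu − K̃_ur K_rr⁻¹ K̃_ru = c² (K_uu − K_ur K_rr⁻¹ K_ru)`; hence if the original
Schur complement is invertible and `c ≠ 0`, the mixed one is invertible with inverse
`M̃ = c⁻² M`. -/
theorem mixed_schur_complement_scaling {D Nr Nu : ℕ}
    (Zr : Matrix (Fin D) (Fin Nr) ℝ) (Zu : Matrix (Fin D) (Fin Nu) ℝ)
    (Krr : Matrix (Fin Nr) (Fin Nr) ℝ) (hKrr : Krr = Zrᵀ * Zr)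
    (hrr : IsUnit Krr)
    (B : Matrix (Fin Nr) (Fin Nu) ℝ)
    (Zrsub : Matrix (Fin D) (Fin Nu) ℝ) (hZrsub : Zrsub = Zr * B)
    (c : ℝ)
    (Ztu : Matrix (Fin D) (Fin Nu) ℝ) (hZtu : Ztu = (1 - c) • Zrsub + c • Zu)
    (Ktru : Matrix (Fin Nr) (Fin Nu) ℝ) (hKtru : Ktru = Zrᵀ * Ztu)
    (Ktur : Matrix (Fin Nu) (Fin Nr) ℝ) (hKtur : Ktur = Ztuᵀ * Zr)
    (Ktuu : Matrix (Fin Nu) (Fin Nu) ℝ) (hKtuu : Ktuu = Ztuᵀ * Ztu)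
    (Kru : Matrix (Fin Nr) (Fin Nu) ℝ) (hKru : Kru = Zrᵀ * Zu)
    (Kur : Matrix (Fin Nu) (Fin Nr) ℝ) (hKur : Kur = Zuᵀ * Zr)
    (Kuu : Matrix (Fin Nu) (Fin Nu) ℝ) (hKuu : Kuu = Zuᵀ * Zu) :
    Ktuu - Ktur * Krr⁻¹ * Ktru = (c ^ 2) • (Kuu - Kur * Krr⁻¹ * Kru) ∧
      (∀ M : Matrix (Fin Nu) (Fin Nu) ℝ,
        IsUnit (Kuu - Kur * Krr⁻¹ * Kru) → M = (Kuu - Kur * Krr⁻¹ * Kru)⁻¹ → c ≠ 0 →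
          IsUnit (Ktuu - Ktur * Krr⁻¹ * Ktru) ∧
            (Ktuu - Ktur * Krr⁻¹ * Ktru)⁻¹ = (c ^ 2)⁻¹ • M) := by
  have hdet : IsUnit Krr.det := (Matrix.isUnit_iff_isUnit_det _).mp hrr
  have hinv : Krr⁻¹ * Krr = 1 := Matrix.nonsing_inv_mul _ hdet
  have hinv' : Krr * Krr⁻¹ = 1 := Matrix.mul_nonsing_inv _ hdet
  have hA : ∀ (X : Matrix (Fin Nr) (Fin Nu) ℝ),
      Zr * (Krr⁻¹ * (Zrᵀ * (Zr * X))) = Zr * X := by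
    intro X
    rw [← Matrix.mul_assoc Zrᵀ Zr X, ← hKrr, ← Matrix.mul_assoc Krr⁻¹ Krr X,
      hinv, Matrix.one_mul]
  have hB : ∀ (X : Matrix (Fin Nr) (Fin Nu) ℝ),
      Zrᵀ * (Zr * (Krr⁻¹ * X)) = X := by
    intro X
    rw [← Matrix.mul_assoc Zrᵀ Zr, ← hKrr, ← Matrix.mul_assoc Krr Krr⁻¹,
      hinv', Matrix.one_mul]
  have key : Ktuu - Ktur * Krr⁻¹ * Ktru = (c ^ 2) • (Kuu - Kur * Krr⁻¹ * Kru) := by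
    subst hZrsub hZtu hKtru hKtur hKtuu hKru hKur hKuu
    generalize (1 - c : ℝ) = a
    simp only [Matrix.transpose_add, Matrix.transpose_smul, Matrix.transpose_mul,
      Matrix.add_mul, Matrix.mul_add, Matrix.smul_mul, Matrix.mul_smul,
      Matrix.mul_assoc, hA, hB, smul_smul, smul_sub, smul_add]
    module
  refine ⟨key, ?_⟩
  intro M hS hM hc
  have hc2 : (c ^ 2 : ℝ) ≠ 0 := pow_ne_zero _ hc
  have hSdet : IsUnit (Kuu - Kur * Krr⁻¹ * Kru).det :=
    (Matrix.isUnit_iff_isUnit_det _).mp hS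
  have hu : IsUnit (Ktuu - Ktur * Krr⁻¹ * Ktru) := by
    rw [key, Matrix.isUnit_iff_isUnit_det, Matrix.det_smul]
    exact (hc2.isUnit.pow _).mul hSdet
  refine ⟨hu, ?_⟩
  rw [key, hM]
  apply Matrix.inv_eq_right_inv
  rw [Matrix.smul_mul, Matrix.mul_smul, smul_smul, mul_inv_cancel₀ hc2,
    Matrix.mul_nonsing_inv _ hSdet, one_smul]
end

section
/- Let Z_r ∈ ℝ^{D×N_r} with K_rr = Z_rᵀ Z_r invertible, Z_u ∈ ℝ^{D×N_u}, B ∈ ℝ^{N_r×N_u}, Z_{r,sub} = Z_r B, and 0 < c < 1 (any c ≠ 0 suffices). Set Z̃_u = (1−c) Z_{r,sub} + c Z_u and Z̃_a = [Z_r Z̃_u], and assume M := (K_uu − K_ur K_rr⁻¹ K_ru)⁻¹ exists, so that Z̃_aᵀ Z̃_a is invertible. Let w_p ∈ ℝᴰ satisfy Z_rᵀ w_p = y_r, set y_{r,sub} = Bᵀ y_r and ỹ_a = [y_r; y_{r,sub}], and define w_u = w_p + Z̃_a (Z̃_aᵀ Z̃_a)⁻¹ (ỹ_a − Z̃_aᵀ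 w_p). Then, with Π_r = Z_r K_rr⁻¹ Z_rᵀ, it holds that w_p − w_u = (I_D − Π_r) Z_u M ( Z_uᵀ w_p − y_{r,sub} ); in particular this difference does not depend on the mixing scalar c. -/
open Matrix

set_option maxHeartbeats 1000000 in

/-- Appendix A: fine-tuning the interpolating pre-trained model `w_p`
on the mixed data `Z̃_a = [Z_r  Z̃_u]`, `Z̃_u = (1−c) Z_{r,sub} + c Z_u`, relabeled
with `ỹ_a = [y_r; y_{r,sub}]`, gives
`w_p − w_u = (I − Π_r) Z_u M (Z_uᵀ w_p − y_{r,sub})`, independently of `c`. -/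
theorem mixed_data_unlearning_gap {D Nr Nu : ℕ}
    (Zr : Matrix (Fin D) (Fin Nr) ℝ) (Zu : Matrix (Fin D) (Fin Nu) ℝ)
    (yr : Fin Nr → ℝ)
    (Krr : Matrix (Fin Nr) (Fin Nr) ℝ) (hKrr : Krr = Zrᵀ * Zr)
    (hrr : IsUnit Krr)
    (Kru : Matrix (Fin Nr) (Fin Nu) ℝ) (hKru : Kru = Zrᵀ * Zu)
    (Kur : Matrix (Fin Nu) (Fin Nr) ℝ) (hKur : Kur = Zuᵀ * Zr)
    (Kuu : Matrix (Fin Nu) (Fin Nu) ℝ) (hKuu : Kuu = Zuᵀ * Zu)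
    (hS : IsUnit (Kuu - Kur * Krr⁻¹ * Kru))
    (M : Matrix (Fin Nu) (Fin Nu) ℝ) (hM : M = (Kuu - Kur * Krr⁻¹ * Kru)⁻¹)
    (B : Matrix (Fin Nr) (Fin Nu) ℝ)
    (Zrsub : Matrix (Fin D) (Fin Nu) ℝ) (hZrsub : Zrsub = Zr * B)
    (c : ℝ) (hc0 : 0 < c) (hc1 : c < 1)
    (Ztu : Matrix (Fin D) (Fin Nu) ℝ) (hZtu : Ztu = (1 - c) • Zrsub + c • Zu)
    (Zta : Matrix (Fin D) (Fin Nr ⊕ Fin Nu) ℝ) (hZta : Zta = Matrix.fromCols Zr Ztu)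
    (yrsub : Fin Nu → ℝ) (hyrsub : yrsub = Bᵀ *ᵥ yr)
    (yta : Fin Nr ⊕ Fin Nu → ℝ) (hyta : yta = Sum.elim yr yrsub)
    (Pr : Matrix (Fin D) (Fin D) ℝ) (hPr : Pr = Zr * Krr⁻¹ * Zrᵀ)
    (wp : Fin D → ℝ) (hinterp : Zrᵀ *ᵥ wp = yr)
    (wu : Fin D → ℝ)
    (hwu : wu = wp + Zta *ᵥ ((Ztaᵀ * Zta)⁻¹ *ᵥ (yta - Ztaᵀ *ᵥ wp))) :
    wp - wu = ((1 - Pr) * Zu * M) *ᵥ (Zuᵀ *ᵥ wp - yrsub) := by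
  have hcne : c ≠ 0 := ne_of_gt hc0
  have hdet : IsUnit Krr.det := (Matrix.isUnit_iff_isUnit_det _).mp hrr
  have hKi : Krr * Krr⁻¹ = 1 := Matrix.mul_nonsing_inv _ hdet
  have hiK : Krr⁻¹ * Krr = 1 := Matrix.nonsing_inv_mul _ hdet
  set S0 : Matrix (Fin Nu) (Fin Nu) ℝ := Kuu - Kur * Krr⁻¹ * Kru with hS0
  have hS0det : IsUnit S0.det := (Matrix.isUnit_iff_isUnit_det _).mp hS
  have hS0i : S0 * S0⁻¹ = 1 := Matrix.mul_nonsing_inv _ hS0det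
  set W : Matrix (Fin D) (Fin Nu) ℝ := Zu - Zr * Krr⁻¹ * Kru with hW
  have fact1 : Zr * Krr⁻¹ * Zrᵀ * Zr = Zr := by
    rw [Matrix.mul_assoc (Zr * Krr⁻¹), ← hKrr, Matrix.mul_assoc, hiK, Matrix.mul_one]
  have hW' : Zr * Krr⁻¹ * Zrᵀ * Zu = Zu - W := by
    rw [hW, hKru, sub_sub_cancel]
    simp only [Matrix.mul_assoc]
  have fact2 : Ztu - Zr * Krr⁻¹ * (Zrᵀ * Ztu) = c • W := by
    rw [hZtu, hZrsub]
    simp only [Matrix.mul_add, Matrix.mul_smul, ← Matrix.mul_assoc]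
    rw [fact1, hW']
    module
  have fact3 : Zrᵀ * W = 0 := by
    rw [hW, Matrix.mul_sub]
    simp only [← Matrix.mul_assoc]
    rw [← hKrr, ← hKru, Matrix.mul_assoc Krr, ← Matrix.mul_assoc Krr, hKi, Matrix.one_mul,
      sub_self]
  have factZuW : Zuᵀ * W = S0 := by
    rw [hW, Matrix.mul_sub, ← hKuu, hS0]
    simp only [← Matrix.mul_assoc, ← hKur]
  have fact4 : Ztuᵀ * W = c • S0 := by
    rw [hZtu, hZrsub, Matrix.transpose_add, Matrix.transpose_smul, Matrix.transpose_smul,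
      Matrix.transpose_mul, Matrix.add_mul, Matrix.smul_mul, Matrix.smul_mul,
      Matrix.mul_assoc Bᵀ, fact3, Matrix.mul_zero, smul_zero, zero_add, factZuW]
  set T : Matrix (Fin Nu) (Fin Nu) ℝ := (c ^ 2)⁻¹ • S0⁻¹ with hT
  have hc2 : (c : ℝ) ^ 2 ≠ 0 := pow_ne_zero _ hcne
  have fact5 : Ztuᵀ * Ztu - Ztuᵀ * Zr * Krr⁻¹ * (Zrᵀ * Ztu) = (c ^ 2) • S0 := by
    rw [show Ztuᵀ * Zr * Krr⁻¹ * (Zrᵀ * Ztu) = Ztuᵀ * (Zr * Krr⁻¹ * (Zrᵀ * Ztu)) from by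
        simp only [Matrix.mul_assoc],
      ← Matrix.mul_sub, fact2, Matrix.mul_smul, fact4, smul_smul, pow_two]
  have hST : (Ztuᵀ * Ztu - Ztuᵀ * Zr * Krr⁻¹ * (Zrᵀ * Ztu)) * T = 1 := by
    rw [fact5, hT, Matrix.smul_mul, Matrix.mul_smul, smul_smul,
      mul_inv_cancel₀ hc2, one_smul, hS0i]
  have hc2T : (c ^ 2) • T = M := by
    rw [hT, hM, smul_smul, mul_inv_cancel₀ hc2, one_smul]
  have hRT : Ztuᵀ * Ztu * T = 1 + Ztuᵀ * Zr * Krr⁻¹ * (Zrᵀ * Ztu) * T := by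
    have h := hST
    rw [Matrix.sub_mul] at h
    rw [sub_eq_iff_eq_add] at h
    exact h
  have hG : Ztaᵀ * Zta = fromBlocks Krr (Zrᵀ * Ztu) (Ztuᵀ * Zr) (Ztuᵀ * Ztu) := by
    rw [hZta, transpose_fromCols, fromRows_mul_fromCols, hKrr]
  have b11 : Krr * (Krr⁻¹ + Krr⁻¹ * (Zrᵀ * Ztu) * T * (Ztuᵀ * Zr) * Krr⁻¹)
      + (Zrᵀ * Ztu) * -(T * (Ztuᵀ * Zr) * Krr⁻¹) = 1 := by
    simp only [Matrix.mul_add, Matrix.mul_neg, ← Matrix.mul_assoc, hKi, Matrix.one_mul]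
    abel
  have b12 : Krr * -(Krr⁻¹ * (Zrᵀ * Ztu) * T) + (Zrᵀ * Ztu) * T = 0 := by
    simp only [Matrix.mul_neg, ← Matrix.mul_assoc, hKi, Matrix.one_mul]
    abel
  have b21 : (Ztuᵀ * Zr) * (Krr⁻¹ + Krr⁻¹ * (Zrᵀ * Ztu) * T * (Ztuᵀ * Zr) * Krr⁻¹)
      + (Ztuᵀ * Ztu) * -(T * (Ztuᵀ * Zr) * Krr⁻¹) = 0 := by
    simp only [Matrix.mul_add, Matrix.mul_neg, ← Matrix.mul_assoc]
    rw [hRT]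
    simp only [Matrix.add_mul, Matrix.one_mul, ← Matrix.mul_assoc]
    abel
  have b22 : (Ztuᵀ * Zr) * -(Krr⁻¹ * (Zrᵀ * Ztu) * T) + (Ztuᵀ * Ztu) * T = 1 := by
    simp only [Matrix.mul_neg, ← Matrix.mul_assoc]
    rw [hRT]
    simp only [← Matrix.mul_assoc]
    abel
  have hGH : (Ztaᵀ * Zta) *
      fromBlocks (Krr⁻¹ + Krr⁻¹ * (Zrᵀ * Ztu) * T * (Ztuᵀ * Zr) * Krr⁻¹)
        (-(Krr⁻¹ * (Zrᵀ * Ztu) * T)) (-(T * (Ztuᵀ * Zr) * Krr⁻¹)) T = 1 := by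
    rw [hG, fromBlocks_multiply, b11, b12, b21, b22, fromBlocks_one]
  have hGinv : (Ztaᵀ * Zta)⁻¹ =
      fromBlocks (Krr⁻¹ + Krr⁻¹ * (Zrᵀ * Ztu) * T * (Ztuᵀ * Zr) * Krr⁻¹)
        (-(Krr⁻¹ * (Zrᵀ * Ztu) * T)) (-(T * (Ztuᵀ * Zr) * Krr⁻¹)) T :=
    Matrix.inv_eq_right_inv hGH
  set e : Fin Nu → ℝ := Zuᵀ *ᵥ wp - yrsub with he
  have hv : yta - Ztaᵀ *ᵥ wp = Sum.elim (0 : Fin Nr → ℝ) ((-c) • e) := by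
    rw [hyta, hZta, transpose_fromCols, fromRows_mulVec, hinterp]
    have h1 : Ztuᵀ *ᵥ wp = (1 - c) • yrsub + c • (Zuᵀ *ᵥ wp) := by
      rw [hZtu, hZrsub, Matrix.transpose_add, Matrix.transpose_smul, Matrix.transpose_smul,
        Matrix.transpose_mul, Matrix.add_mulVec, Matrix.smul_mulVec,
        Matrix.smul_mulVec, ← Matrix.mulVec_mulVec, hinterp, hyrsub]
    funext x
    cases x with
    | inl i => simp
    | inr i =>
      simp only [Sum.elim_inr, Pi.sub_apply, h1, he, Pi.smul_apply, Pi.add_apply,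
        Pi.neg_apply, smul_eq_mul]
      ring
  -- key matrix identity
  have hW2 : (1 - Pr) * Zu = W := by
    rw [hPr, hW, hKru, Matrix.sub_mul, Matrix.one_mul]
    simp only [Matrix.mul_assoc]
  have h1 : Ztu * T - Zr * (Krr⁻¹ * (Zrᵀ * Ztu) * T) = c • (W * T) := by
    rw [show Zr * (Krr⁻¹ * (Zrᵀ * Ztu) * T) = (Zr * Krr⁻¹ * (Zrᵀ * Ztu)) * T from by
        simp only [Matrix.mul_assoc],
      ← Matrix.sub_mul, fact2, Matrix.smul_mul]
  have hWM : W * M = (c * c) • (W * T) := by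
    rw [← hc2T, Matrix.mul_smul, pow_two]
  have matid : (-c) • -(Zr * (Krr⁻¹ * (Zrᵀ * Ztu) * T)) + (-c) • (Ztu * T) = -(W * M) := by
    have h3 : (-c) • -(Zr * (Krr⁻¹ * (Zrᵀ * Ztu) * T)) + (-c) • (Ztu * T)
        = (-c) • (Ztu * T - Zr * (Krr⁻¹ * (Zrᵀ * Ztu) * T)) := by module
    rw [h3, h1, smul_smul, hWM]
    module
  have hfinal : Zta *ᵥ ((Ztaᵀ * Zta)⁻¹ *ᵥ (yta - Ztaᵀ *ᵥ wp)) = -((W * M) *ᵥ e) := by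
    rw [hGinv, hv, fromBlocks_mulVec]
    simp only [Sum.elim_comp_inl, Sum.elim_comp_inr, Matrix.mulVec_zero, zero_add]
    rw [hZta, fromCols_mulVec_sumElim]
    simp only [Matrix.mulVec_smul, Matrix.mulVec_mulVec]
    rw [← Matrix.smul_mulVec, ← Matrix.smul_mulVec, ← Matrix.add_mulVec,
      show Zr * -(Krr⁻¹ * (Zrᵀ * Ztu) * T) = -(Zr * (Krr⁻¹ * (Zrᵀ * Ztu) * T)) from
        Matrix.mul_neg _ _, matid, Matrix.neg_mulVec]
  rw [hwu, hW2, hfinal, hWM, ← hWM]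
  module
end

section
/- Let Z_r ∈ ℝ^{D×N_r} with K_rr = Z_rᵀ Z_r invertible, Z_u ∈ ℝ^{D×N_u}, B ∈ ℝ^{N_r×N_u}, Z_{r,sub} = Z_r B, y_{r,sub} = Bᵀ y_r, and 0 < c < 1 (any c ≠ 0 suffices). Assume M := (K_uu − K_ur K_rr⁻¹ K_ru)⁻¹ exists. With Z_a = [Z_r Z_u], y_a = [y_r; y_u], Z̃_u = (1−c) Z_{r,sub} + c Z_u, Z̃_a = [Z_r Z̃_u], ỹ_a = [y_r; y_{r,sub}], define w_p = w_init + Z_a (Z_aᵀ Z_a)⁻¹ (y_a − Z_aᵀ w_init), w_u = w_p + Z̃_a (Z̃_aᵀ Z̃_a)⁻¹ (ỹ_a − Z̃_aᵀ w_p), w_r = w_init + Z_r K_rr⁻¹ (y_r − Z_rᵀ w_init), and Π_r = Z_r K_rr⁻¹ Z_rᵀ. Then w_r − w_u = (I_D − Π_r) Z_u M ( K_ur K_rr⁻¹ (y_r − Z_rᵀ w_init) + Z_uᵀ w_init − y_{r,sub} ); in particular the gap w_r − w_u depends only on y_{r,sub} and is independent of the mixing scalar c. -/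
open Matrix
set_option maxHeartbeats 1000000

lemma sum_elim_sub' {α β R : Type*} [Sub R] (p u : α → R) (q v : β → R) :
    Sum.elim p q - Sum.elim u v = Sum.elim (p - u) (q - v) := by
  funext i; cases i <;> rfl

lemma gram_block_solve {D Nr Nu : ℕ}
    (X : Matrix (Fin D) (Fin Nr) ℝ) (Y : Matrix (Fin D) (Fin Nu) ℝ)
    (hA : IsUnit (Xᵀ * X))
    (hSch : IsUnit (Yᵀ * Y - Yᵀ * X * (Xᵀ * X)⁻¹ * (Xᵀ * Y)))
    (w0 : Fin D → ℝ) (p : Fin Nr → ℝ) (q : Fin Nu → ℝ) :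
    w0 + (fromCols X Y) *ᵥ (((fromCols X Y)ᵀ * fromCols X Y)⁻¹ *ᵥ
        (Sum.elim p q - (fromCols X Y)ᵀ *ᵥ w0)) =
      w0 + X *ᵥ ((Xᵀ * X)⁻¹ *ᵥ (p - Xᵀ *ᵥ w0))
        + (Y - X * ((Xᵀ * X)⁻¹ * (Xᵀ * Y))) *ᵥ
            ((Yᵀ * Y - Yᵀ * X * (Xᵀ * X)⁻¹ * (Xᵀ * Y))⁻¹ *ᵥ
              ((q - Yᵀ *ᵥ w0) - (Yᵀ * X) *ᵥ ((Xᵀ * X)⁻¹ *ᵥ (p - Xᵀ *ᵥ w0)))) := by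
  set A := Xᵀ * X with hAdef
  set Bm := Xᵀ * Y with hBdef
  set Cm := Yᵀ * X with hCdef
  set Dm := Yᵀ * Y with hDdef
  set S := Dm - Cm * A⁻¹ * Bm with hSdef
  have hAA : A * A⁻¹ = 1 := mul_nonsing_inv A ((isUnit_iff_isUnit_det A).mp hA)
  have hSS : S * S⁻¹ = 1 := mul_nonsing_inv S ((isUnit_iff_isUnit_det S).mp hSch)
  have hGram : (fromCols X Y)ᵀ * fromCols X Y = fromBlocks A Bm Cm Dm := by
    rw [transpose_fromCols, fromRows_mul_fromCols]
  have hGu : IsUnit (fromBlocks A Bm Cm Dm) := by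
    obtain ⟨iA⟩ := hA.nonempty_invertible
    obtain ⟨iS⟩ := hSch.nonempty_invertible
    letI := iA
    letI : Invertible (Dm - Cm * ⅟A * Bm) := by
      rw [invOf_eq_nonsing_inv]; exact iS
    letI := fromBlocks₁₁Invertible A Bm Cm Dm
    exact isUnit_of_invertible _
  set a := p - Xᵀ *ᵥ w0 with hadef
  set b := q - Yᵀ *ᵥ w0 with hbdef
  set g := S⁻¹ *ᵥ (b - Cm *ᵥ (A⁻¹ *ᵥ a)) with hgdef
  set t := Sum.elim (A⁻¹ *ᵥ a - A⁻¹ *ᵥ (Bm *ᵥ g)) g with htdef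
  have hGt : fromBlocks A Bm Cm Dm *ᵥ t = Sum.elim a b := by
    rw [fromBlocks_mulVec]
    have h1 : t ∘ Sum.inl = A⁻¹ *ᵥ a - A⁻¹ *ᵥ (Bm *ᵥ g) := rfl
    have h2 : t ∘ Sum.inr = g := rfl
    rw [h1, h2]
    have hSg : S *ᵥ g = b - Cm *ᵥ (A⁻¹ *ᵥ a) := by
      rw [hgdef, mulVec_mulVec, hSS, one_mulVec]
    have top : A *ᵥ (A⁻¹ *ᵥ a - A⁻¹ *ᵥ (Bm *ᵥ g)) + Bm *ᵥ g = a := by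
      rw [mulVec_sub, mulVec_mulVec, mulVec_mulVec, hAA, one_mulVec, one_mulVec]
      abel
    have bot : Cm *ᵥ (A⁻¹ *ᵥ a - A⁻¹ *ᵥ (Bm *ᵥ g)) + Dm *ᵥ g = b := by
      have hsub : Dm *ᵥ g - (Cm * A⁻¹ * Bm) *ᵥ g = b - Cm *ᵥ (A⁻¹ *ᵥ a) := by
        rw [← sub_mulVec, ← hSdef, hSg]
      have h3 : Cm *ᵥ (A⁻¹ *ᵥ (Bm *ᵥ g)) = (Cm * A⁻¹ * Bm) *ᵥ g := by
        rw [mulVec_mulVec, mulVec_mulVec]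
      have key : Cm *ᵥ (A⁻¹ *ᵥ a) + (Dm *ᵥ g - (Cm * A⁻¹ * Bm) *ᵥ g) = b := by
        rw [hsub]; abel
      calc Cm *ᵥ (A⁻¹ *ᵥ a - A⁻¹ *ᵥ (Bm *ᵥ g)) + Dm *ᵥ g
          = Cm *ᵥ (A⁻¹ *ᵥ a) + (Dm *ᵥ g - (Cm * A⁻¹ * Bm) *ᵥ g) := by
            rw [mulVec_sub, h3]; abel
        _ = b := key
    rw [top, bot]
  have ht : ((fromCols X Y)ᵀ * fromCols X Y)⁻¹ *ᵥ
      (Sum.elim p q - (fromCols X Y)ᵀ *ᵥ w0) = t := by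
    rw [hGram, transpose_fromCols, fromRows_mulVec, sum_elim_sub', ← hadef, ← hbdef,
      ← hGt, mulVec_mulVec, nonsing_inv_mul _ ((isUnit_iff_isUnit_det _).mp hGu), one_mulVec]
  rw [ht, htdef, fromCols_mulVec_sumElim]
  have hrhs : ∀ v : Fin Nu → ℝ,
      (Y - X * (A⁻¹ * Bm)) *ᵥ v = Y *ᵥ v - X *ᵥ (A⁻¹ *ᵥ (Bm *ᵥ v)) := by
    intro v
    rw [sub_mulVec]
    congr 1
    rw [mulVec_mulVec, mulVec_mulVec, Matrix.mul_assoc]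
  show w0 + (X *ᵥ (A⁻¹ *ᵥ a - A⁻¹ *ᵥ (Bm *ᵥ g)) + Y *ᵥ g)
      = w0 + X *ᵥ (A⁻¹ *ᵥ a) + (Y - X * (A⁻¹ * Bm)) *ᵥ g
  rw [hrhs g, mulVec_sub]
  abel


/-- Appendix A, final identity: with the pre-trained model `w_p`
(minimum-norm interpolant of all data from `w_init`), the unlearned model `w_u`
obtained by fine-tuning on the mixed data `Z̃_a = [Z_r  Z̃_u]` relabeled with
`ỹ_a = [y_r; y_{r,sub}]`, and the retrained model `w_r`, one has
`w_r − w_u = (I − Π_r) Z_u M (K_ur K_rr⁻¹ (y_r − Z_rᵀ w_init) + Z_uᵀ w_init − y_{r,sub})`,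
which depends only on `y_{r,sub}` and not on the mixing scalar `c`. -/
theorem mixed_data_gap_to_retrain {D Nr Nu : ℕ}
    (Zr : Matrix (Fin D) (Fin Nr) ℝ) (Zu : Matrix (Fin D) (Fin Nu) ℝ)
    (yr : Fin Nr → ℝ) (yu : Fin Nu → ℝ) (winit : Fin D → ℝ)
    (Krr : Matrix (Fin Nr) (Fin Nr) ℝ) (hKrr : Krr = Zrᵀ * Zr)
    (hrr : IsUnit Krr)
    (Kru : Matrix (Fin Nr) (Fin Nu) ℝ) (hKru : Kru = Zrᵀ * Zu)
    (Kur : Matrix (Fin Nu) (Fin Nr) ℝ) (hKur : Kur = Zuᵀ * Zr)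
    (Kuu : Matrix (Fin Nu) (Fin Nu) ℝ) (hKuu : Kuu = Zuᵀ * Zu)
    (hS : IsUnit (Kuu - Kur * Krr⁻¹ * Kru))
    (M : Matrix (Fin Nu) (Fin Nu) ℝ) (hM : M = (Kuu - Kur * Krr⁻¹ * Kru)⁻¹)
    (B : Matrix (Fin Nr) (Fin Nu) ℝ)
    (Zrsub : Matrix (Fin D) (Fin Nu) ℝ) (hZrsub : Zrsub = Zr * B)
    (yrsub : Fin Nu → ℝ) (hyrsub : yrsub = Bᵀ *ᵥ yr)
    (c : ℝ) (hc0 : 0 < c) (hc1 : c < 1)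
    (Ztu : Matrix (Fin D) (Fin Nu) ℝ) (hZtu : Ztu = (1 - c) • Zrsub + c • Zu)
    (Za : Matrix (Fin D) (Fin Nr ⊕ Fin Nu) ℝ) (hZa : Za = Matrix.fromCols Zr Zu)
    (ya : Fin Nr ⊕ Fin Nu → ℝ) (hya : ya = Sum.elim yr yu)
    (Zta : Matrix (Fin D) (Fin Nr ⊕ Fin Nu) ℝ) (hZta : Zta = Matrix.fromCols Zr Ztu)
    (yta : Fin Nr ⊕ Fin Nu → ℝ) (hyta : yta = Sum.elim yr yrsub)
    (Pr : Matrix (Fin D) (Fin D) ℝ) (hPr : Pr = Zr * Krr⁻¹ * Zrᵀ)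
    (wp : Fin D → ℝ)
    (hwp : wp = winit + Za *ᵥ ((Zaᵀ * Za)⁻¹ *ᵥ (ya - Zaᵀ *ᵥ winit)))
    (wu : Fin D → ℝ)
    (hwu : wu = wp + Zta *ᵥ ((Ztaᵀ * Zta)⁻¹ *ᵥ (yta - Ztaᵀ *ᵥ wp)))
    (wr : Fin D → ℝ)
    (hwr : wr = winit + Zr *ᵥ (Krr⁻¹ *ᵥ (yr - Zrᵀ *ᵥ winit))) :
    wr - wu =
      ((1 - Pr) * Zu * M) *ᵥ
        (Kur *ᵥ (Krr⁻¹ *ᵥ (yr - Zrᵀ *ᵥ winit)) + Zuᵀ *ᵥ winit - yrsub) := by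
  subst hKrr hKru hKur hKuu hM hZrsub hyrsub hZtu hZa hya hZta hyta hPr
  have hc : c ≠ 0 := ne_of_gt hc0
  have hrdet : IsUnit (Zrᵀ * Zr).det := (isUnit_iff_isUnit_det _).mp hrr
  have hAA : (Zrᵀ * Zr) * (Zrᵀ * Zr)⁻¹ = 1 := mul_nonsing_inv _ hrdet
  have hA'A : (Zrᵀ * Zr)⁻¹ * (Zrᵀ * Zr) = 1 := nonsing_inv_mul _ hrdet
  have hSdet : IsUnit (Zuᵀ * Zu - Zuᵀ * Zr * (Zrᵀ * Zr)⁻¹ * (Zrᵀ * Zu)).det :=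
    (isUnit_iff_isUnit_det _).mp hS
  have hSS : (Zuᵀ * Zu - Zuᵀ * Zr * (Zrᵀ * Zr)⁻¹ * (Zrᵀ * Zu))
      * (Zuᵀ * Zu - Zuᵀ * Zr * (Zrᵀ * Zr)⁻¹ * (Zrᵀ * Zu))⁻¹ = 1 := mul_nonsing_inv _ hSdet
  -- key projected matrices
  have hZrE : Zrᵀ * (Zu - Zr * ((Zrᵀ * Zr)⁻¹ * (Zrᵀ * Zu))) = 0 := by
    rw [Matrix.mul_sub, ← Matrix.mul_assoc, ← Matrix.mul_assoc, hAA, Matrix.one_mul, sub_self]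
  have hZuE : Zuᵀ * (Zu - Zr * ((Zrᵀ * Zr)⁻¹ * (Zrᵀ * Zu)))
      = Zuᵀ * Zu - Zuᵀ * Zr * (Zrᵀ * Zr)⁻¹ * (Zrᵀ * Zu) := by
    rw [Matrix.mul_sub, ← Matrix.mul_assoc, ← Matrix.mul_assoc]
  -- closed form for wp
  rw [gram_block_solve Zr Zu hrr hS winit yr yu] at hwp
  have hZrwp : Zrᵀ *ᵥ wp = yr := by
    rw [hwp, mulVec_add, mulVec_add]
    have e1 : Zrᵀ *ᵥ (Zr *ᵥ ((Zrᵀ * Zr)⁻¹ *ᵥ (yr - Zrᵀ *ᵥ winit))) = yr - Zrᵀ *ᵥ winit := by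
      rw [mulVec_mulVec, mulVec_mulVec, hAA, one_mulVec]
    have e2 : Zrᵀ *ᵥ ((Zu - Zr * ((Zrᵀ * Zr)⁻¹ * (Zrᵀ * Zu))) *ᵥ
        ((Zuᵀ * Zu - Zuᵀ * Zr * (Zrᵀ * Zr)⁻¹ * (Zrᵀ * Zu))⁻¹ *ᵥ
          ((yu - Zuᵀ *ᵥ winit) - (Zuᵀ * Zr) *ᵥ ((Zrᵀ * Zr)⁻¹ *ᵥ (yr - Zrᵀ *ᵥ winit))))) = 0 := by
      rw [mulVec_mulVec, hZrE, zero_mulVec]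
    rw [e1, e2]
    abel
  have hZuwp : Zuᵀ *ᵥ wp = yu := by
    rw [hwp, mulVec_add, mulVec_add]
    have e3 : Zuᵀ *ᵥ (Zr *ᵥ ((Zrᵀ * Zr)⁻¹ *ᵥ (yr - Zrᵀ *ᵥ winit)))
        = (Zuᵀ * Zr) *ᵥ ((Zrᵀ * Zr)⁻¹ *ᵥ (yr - Zrᵀ *ᵥ winit)) := by
      rw [mulVec_mulVec]
    have e4 : Zuᵀ *ᵥ ((Zu - Zr * ((Zrᵀ * Zr)⁻¹ * (Zrᵀ * Zu))) *ᵥ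
        ((Zuᵀ * Zu - Zuᵀ * Zr * (Zrᵀ * Zr)⁻¹ * (Zrᵀ * Zu))⁻¹ *ᵥ
          ((yu - Zuᵀ *ᵥ winit) - (Zuᵀ * Zr) *ᵥ ((Zrᵀ * Zr)⁻¹ *ᵥ (yr - Zrᵀ *ᵥ winit)))))
        = (yu - Zuᵀ *ᵥ winit) - (Zuᵀ * Zr) *ᵥ ((Zrᵀ * Zr)⁻¹ *ᵥ (yr - Zrᵀ *ᵥ winit)) := by
      rw [mulVec_mulVec, hZuE, mulVec_mulVec, hSS, one_mulVec]
    rw [e3, e4]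
    abel
  -- the mixed feature matrix
  have hZrZtu : Zrᵀ * ((1 - c) • (Zr * B) + c • Zu)
      = (1 - c) • ((Zrᵀ * Zr) * B) + c • (Zrᵀ * Zu) := by
    rw [Matrix.mul_add, Matrix.mul_smul, Matrix.mul_smul, ← Matrix.mul_assoc]
  have hinvZtu : (Zrᵀ * Zr)⁻¹ * (Zrᵀ * ((1 - c) • (Zr * B) + c • Zu))
      = (1 - c) • B + c • ((Zrᵀ * Zr)⁻¹ * (Zrᵀ * Zu)) := by
    rw [hZrZtu, Matrix.mul_add, Matrix.mul_smul, Matrix.mul_smul, ← Matrix.mul_assoc,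
      hA'A, Matrix.one_mul]
  have hF : ((1 - c) • (Zr * B) + c • Zu)
        - Zr * ((Zrᵀ * Zr)⁻¹ * (Zrᵀ * ((1 - c) • (Zr * B) + c • Zu)))
      = c • (Zu - Zr * ((Zrᵀ * Zr)⁻¹ * (Zrᵀ * Zu))) := by
    rw [hinvZtu, Matrix.mul_add, Matrix.mul_smul, Matrix.mul_smul]
    module
  have hZtuT : ((1 - c) • (Zr * B) + c • Zu)ᵀ = (1 - c) • (Bᵀ * Zrᵀ) + c • Zuᵀ := by
    rw [transpose_add, transpose_smul, transpose_smul, transpose_mul]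
  have hZtuE : ((1 - c) • (Zr * B) + c • Zu)ᵀ * (Zu - Zr * ((Zrᵀ * Zr)⁻¹ * (Zrᵀ * Zu)))
      = c • (Zuᵀ * Zu - Zuᵀ * Zr * (Zrᵀ * Zr)⁻¹ * (Zrᵀ * Zu)) := by
    rw [hZtuT, Matrix.add_mul, Matrix.smul_mul, Matrix.smul_mul, Matrix.mul_assoc, hZrE,
      Matrix.mul_zero, smul_zero, zero_add, hZuE]
  have hS2eq : ((1 - c) • (Zr * B) + c • Zu)ᵀ * ((1 - c) • (Zr * B) + c • Zu)
        - ((1 - c) • (Zr * B) + c • Zu)ᵀ * Zr * (Zrᵀ * Zr)⁻¹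
          * (Zrᵀ * ((1 - c) • (Zr * B) + c • Zu))
      = (c * c) • (Zuᵀ * Zu - Zuᵀ * Zr * (Zrᵀ * Zr)⁻¹ * (Zrᵀ * Zu)) := by
    have e5 : ((1 - c) • (Zr * B) + c • Zu)ᵀ * Zr * (Zrᵀ * Zr)⁻¹
          * (Zrᵀ * ((1 - c) • (Zr * B) + c • Zu))
        = ((1 - c) • (Zr * B) + c • Zu)ᵀ
          * (Zr * ((Zrᵀ * Zr)⁻¹ * (Zrᵀ * ((1 - c) • (Zr * B) + c • Zu)))) := by
      rw [Matrix.mul_assoc, Matrix.mul_assoc]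
    rw [e5, ← Matrix.mul_sub, hF, Matrix.mul_smul, hZtuE, smul_smul]
  have hS2 : IsUnit (((1 - c) • (Zr * B) + c • Zu)ᵀ * ((1 - c) • (Zr * B) + c • Zu)
        - ((1 - c) • (Zr * B) + c • Zu)ᵀ * Zr * (Zrᵀ * Zr)⁻¹
          * (Zrᵀ * ((1 - c) • (Zr * B) + c • Zu))) := by
    rw [hS2eq, Algebra.smul_def]
    exact (IsUnit.map (algebraMap ℝ (Matrix (Fin Nu) (Fin Nu) ℝ))
      ((isUnit_iff_ne_zero.mpr hc).mul (isUnit_iff_ne_zero.mpr hc))).mul hS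
  have hS2' : IsUnit ((c * c) • (Zuᵀ * Zu - Zuᵀ * Zr * (Zrᵀ * Zr)⁻¹ * (Zrᵀ * Zu))) :=
    hS2eq ▸ hS2
  -- closed form for wu
  rw [gram_block_solve Zr ((1 - c) • (Zr * B) + c • Zu) hrr hS2 wp yr (Bᵀ *ᵥ yr)] at hwu
  rw [hZrwp, sub_self, mulVec_zero, mulVec_zero, mulVec_zero, add_zero, sub_zero] at hwu
  have hZtuwp : ((1 - c) • (Zr * B) + c • Zu)ᵀ *ᵥ wp = (1 - c) • (Bᵀ *ᵥ yr) + c • yu := by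
    rw [hZtuT, add_mulVec, smul_mulVec, smul_mulVec, ← mulVec_mulVec,
      hZrwp, hZuwp]
  have harg : Bᵀ *ᵥ yr - ((1 - c) • (Bᵀ *ᵥ yr) + c • yu) = c • (Bᵀ *ᵥ yr - yu) := by
    module
  have hg2 : ((c * c) • (Zuᵀ * Zu - Zuᵀ * Zr * (Zrᵀ * Zr)⁻¹ * (Zrᵀ * Zu)))⁻¹ *ᵥ
        (c • (Bᵀ *ᵥ yr - yu))
      = c⁻¹ • ((Zuᵀ * Zu - Zuᵀ * Zr * (Zrᵀ * Zr)⁻¹ * (Zrᵀ * Zu))⁻¹ *ᵥ (Bᵀ *ᵥ yr - yu)) := by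
    have hS2det : IsUnit ((c * c) • (Zuᵀ * Zu - Zuᵀ * Zr * (Zrᵀ * Zr)⁻¹ * (Zrᵀ * Zu))).det :=
      (isUnit_iff_isUnit_det _).mp hS2'
    have hmul : ((c * c) • (Zuᵀ * Zu - Zuᵀ * Zr * (Zrᵀ * Zr)⁻¹ * (Zrᵀ * Zu))) *ᵥ
          (c⁻¹ • ((Zuᵀ * Zu - Zuᵀ * Zr * (Zrᵀ * Zr)⁻¹ * (Zrᵀ * Zu))⁻¹ *ᵥ (Bᵀ *ᵥ yr - yu)))
        = c • (Bᵀ *ᵥ yr - yu) := by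
      rw [smul_mulVec, mulVec_smul, mulVec_mulVec, hSS, one_mulVec, smul_smul]
      have : c * c * c⁻¹ = c := by field_simp
      rw [this]
    rw [← hmul, mulVec_mulVec, nonsing_inv_mul _ hS2det, one_mulVec]
  rw [hZtuwp, harg, hF, hS2eq, hg2] at hwu
  have hcE : (c • (Zu - Zr * ((Zrᵀ * Zr)⁻¹ * (Zrᵀ * Zu)))) *ᵥ
        (c⁻¹ • ((Zuᵀ * Zu - Zuᵀ * Zr * (Zrᵀ * Zr)⁻¹ * (Zrᵀ * Zu))⁻¹ *ᵥ (Bᵀ *ᵥ yr - yu)))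
      = (Zu - Zr * ((Zrᵀ * Zr)⁻¹ * (Zrᵀ * Zu))) *ᵥ
        ((Zuᵀ * Zu - Zuᵀ * Zr * (Zrᵀ * Zr)⁻¹ * (Zrᵀ * Zu))⁻¹ *ᵥ (Bᵀ *ᵥ yr - yu)) := by
    rw [smul_mulVec, mulVec_smul, smul_smul, mul_inv_cancel₀ hc, one_smul]
  rw [hcE] at hwu
  -- final assembly
  have h1P : (1 - Zr * (Zrᵀ * Zr)⁻¹ * Zrᵀ) * Zu = Zu - Zr * ((Zrᵀ * Zr)⁻¹ * (Zrᵀ * Zu)) := by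
    rw [Matrix.sub_mul, Matrix.one_mul, Matrix.mul_assoc, Matrix.mul_assoc]
  rw [hwr, hwu, hwp, h1P,
    ← mulVec_mulVec ((Zuᵀ * Zr) *ᵥ ((Zrᵀ * Zr)⁻¹ *ᵥ (yr - Zrᵀ *ᵥ winit)) + Zuᵀ *ᵥ winit
        - Bᵀ *ᵥ yr)
      (Zu - Zr * ((Zrᵀ * Zr)⁻¹ * (Zrᵀ * Zu)))
      (Zuᵀ * Zu - Zuᵀ * Zr * (Zrᵀ * Zr)⁻¹ * (Zrᵀ * Zu))⁻¹]
  have hveq : (Zuᵀ * Zr) *ᵥ ((Zrᵀ * Zr)⁻¹ *ᵥ (yr - Zrᵀ *ᵥ winit)) + Zuᵀ *ᵥ winit - Bᵀ *ᵥ yr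
      = -((yu - Zuᵀ *ᵥ winit) - (Zuᵀ * Zr) *ᵥ ((Zrᵀ * Zr)⁻¹ *ᵥ (yr - Zrᵀ *ᵥ winit)))
        + -(Bᵀ *ᵥ yr - yu) := by
    abel
  rw [hveq, mulVec_add, mulVec_neg, mulVec_neg, mulVec_add, mulVec_neg, mulVec_neg]
  abel
end
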